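/- arXiv:2506.17574 — 5 statements merged into one kernel-verified Lean document; each statement's English description precedes it below -/
import Mathlib

section
/- Suppose α ∈ S satisfies c_α = 2 and ⟨α, θ^∨⟩ = 1. Then for every root β ∈ Φ one has ⟨β, θ^∨⟩ = x_α(β), the coefficient of α in the expression of β in the base; in particular, for every negative root β ∈ Φ⁻, ⟨β, θ^∨⟩ ∈ {0, −1, −2}. -/
/-!
An abstract based (reduced, irreducible, crystallographic) root system:
`Φ` is the set of roots in a real vector space `V`, `S` is a base (set of
simple roots), `coeff r β` is the integer coefficient `x_β(r)` of the simple
root `β` in the expression of the root `r` in the base, `pairing r s` is the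
integer `⟨r, s^∨⟩` (pairing of the root `r` with the coroot of the root `s`),
and `highest` is the highest root `θ = Σ_{β ∈ S} c_β • β`, characterized by
the fact that `θ - r` is a nonnegative integer combination of `S` for every
root `r` (field `highest_le`); irreducibility is recorded through the fact
that every coefficient of the highest root is positive (`highest_coeff_pos`).
-/
structure BasedRootData (V : Type*) [AddCommGroup V] [Module ℝ V] where
  Φ : Set V
  S : Finset V
  coeff : V → V → ℤ
  pairing : V → V → ℤ
  S_subset : (S : Set V) ⊆ Φ
  finite : Φ.Finite
  root_ne_zero : ∀ r ∈ Φ, r ≠ (0 : V)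
  neg_mem : ∀ r ∈ Φ, -r ∈ Φ
  indep : LinearIndependent ℝ (fun β : S => (β : V))
  span_root : ∀ r ∈ Φ, r = ∑ β ∈ S, (coeff r β : ℝ) • (β : V)
  coeff_sign : ∀ r ∈ Φ, (∀ β ∈ S, 0 ≤ coeff r β) ∨ (∀ β ∈ S, coeff r β ≤ 0)
  coeff_neg : ∀ r ∈ Φ, ∀ β ∈ S, coeff (-r) β = - coeff r β
  coeff_simple_self : ∀ β ∈ S, coeff β β = 1
  coeff_simple_ne : ∀ β ∈ S, ∀ γ ∈ S, γ ≠ β → coeff β γ = 0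
  pairing_self : ∀ r ∈ Φ, pairing r r = 2
  pairing_linear : ∀ r ∈ Φ, ∀ s ∈ Φ, pairing r s = ∑ β ∈ S, coeff r β * pairing β s
  reflect_mem : ∀ r ∈ Φ, ∀ s ∈ Φ, r - (pairing r s) • s ∈ Φ
  highest : V
  highest_mem : highest ∈ Φ
  highest_le : ∀ r ∈ Φ, ∀ β ∈ S, coeff r β ≤ coeff highest β
  highest_coeff_pos : ∀ β ∈ S, 0 < coeff highest β

namespace BasedRootData

variable {V : Type*} [AddCommGroup V] [Module ℝ V]

/-- The set `Φ⁺` of positive roots: roots all of whose coefficients in the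
base are nonnegative. -/
def Pos (B : BasedRootData V) : Set V :=
  {r ∈ B.Φ | ∀ β ∈ B.S, 0 ≤ B.coeff r β}

/-- The set `Φ⁻` of negative roots: roots all of whose coefficients in the
base are nonpositive. -/
def Neg (B : BasedRootData V) : Set V :=
  {r ∈ B.Φ | ∀ β ∈ B.S, B.coeff r β ≤ 0}

/-- `μ(α)`: the set of positive roots whose coefficient at the simple root
`α` equals the coefficient `c_α` of `α` in the highest root. -/
def mu (B : BasedRootData V) (α : V) : Set V :=
  {r ∈ B.Pos | B.coeff r α = B.coeff B.highest α}

end BasedRootData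

private lemma coeff_eq' {V : Type*} [AddCommGroup V] [Module ℝ V] (B : BasedRootData V)
    (r : V) (hr : r ∈ B.Φ) (f : V → ℤ)
    (h : r = ∑ β ∈ B.S, (f β : ℝ) • (β : V)) :
    ∀ β ∈ B.S, B.coeff r β = f β := by
  have hspan := B.span_root r hr
  have hzero : ∑ β ∈ B.S.attach, (((B.coeff r β - f β : ℤ) : ℝ)) • (β : V) = 0 := by
    have : ∑ β ∈ B.S, (((B.coeff r β - f β : ℤ) : ℝ)) • (β : V) = 0 := by
      have := hspan.symm.trans h
      simp only [Int.cast_sub, sub_smul, Finset.sum_sub_distrib]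
      rw [sub_eq_zero]
      exact this
    rw [← this]
    exact Finset.sum_attach B.S (fun β => ((B.coeff r β - f β : ℤ) : ℝ) • β)
  have hind := B.indep
  rw [Fintype.linearIndependent_iff] at hind
  intro β hβ
  have := hind (fun β => ((B.coeff r β - f β : ℤ) : ℝ)) ?_ ⟨β, hβ⟩
  · have : ((B.coeff r β - f β : ℤ) : ℝ) = 0 := this
    have : (B.coeff r β - f β : ℤ) = 0 := by exact_mod_cast this
    omega
  · rw [← hzero]
    exact Finset.sum_congr (Finset.univ_eq_attach B.S) (fun _ _ => rfl)

/-- suppose `α ∈ S` satisfies `c_α = 2` and `⟨α, θ^∨⟩ = 1`.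
Then for every root `β ∈ Φ` one has `⟨β, θ^∨⟩ = x_α(β)`; in particular
for every negative root `β`, `⟨β, θ^∨⟩ ∈ {0, −1, −2}`. -/
theorem statement6 {V : Type*} [AddCommGroup V] [Module ℝ V] (B : BasedRootData V)
    (α : V) (hα : α ∈ B.S) (hc : B.coeff B.highest α = 2)
    (hp : B.pairing α B.highest = 1) :
    ∀ β ∈ B.Φ, B.pairing β B.highest = B.coeff β α ∧
      (β ∈ B.Neg → B.pairing β B.highest ∈ ({0, -1, -2} : Set ℤ)) := by
  classical
  set θ := B.highest with hθ
  have hθΦ := B.highest_mem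
  have hαΦ : α ∈ B.Φ := B.S_subset hα
  -- pairing of simple roots with θ is nonnegative
  have hnn : ∀ γ ∈ B.S, 0 ≤ B.pairing γ θ := by
    intro γ hγ
    by_contra hneg
    push_neg at hneg
    have hγΦ : γ ∈ B.Φ := B.S_subset hγ
    set k := B.pairing γ θ with hk
    have hrΦ : γ - k • θ ∈ B.Φ := B.reflect_mem γ hγΦ θ hθΦ
    have hform : γ - k • θ = ∑ β ∈ B.S, ((B.coeff γ β - k * B.coeff θ β : ℤ) : ℝ) • (β : V) := by
      have h1 := B.span_root γ hγΦ
      have h2 := B.span_root θ hθΦ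
      have hks : (k : ℤ) • θ = (k : ℝ) • θ := Int.cast_smul_eq_zsmul ℝ k θ |>.symm
      rw [hks]
      calc γ - (k : ℝ) • θ
          = (∑ β ∈ B.S, (B.coeff γ β : ℝ) • (β : V))
            - (k : ℝ) • ∑ β ∈ B.S, (B.coeff θ β : ℝ) • (β : V) := by rw [← h1, ← h2]
        _ = ∑ β ∈ B.S, ((B.coeff γ β - k * B.coeff θ β : ℤ) : ℝ) • (β : V) := by
            rw [Finset.smul_sum, ← Finset.sum_sub_distrib]
            apply Finset.sum_congr rfl
            intro β _
            rw [smul_smul, ← sub_smul]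
            push_cast
            ring_nf
    have hco := coeff_eq' B _ hrΦ _ hform γ hγ
    have hle := B.highest_le _ hrΦ γ hγ
    rw [hco] at hle
    have h11 := B.coeff_simple_self γ hγ
    have hcpos := B.highest_coeff_pos γ hγ
    -- 1 - k * c_γ ≤ c_γ with k ≤ -1, c_γ > 0 : contradiction
    nlinarith [hle, h11, hcpos, hneg]
  -- sum identity: 2 = Σ c_γ * pairing γ θ
  have hsum : (2 : ℤ) = ∑ γ ∈ B.S, B.coeff θ γ * B.pairing γ θ := by
    have := B.pairing_linear θ hθΦ θ hθΦ
    rw [B.pairing_self θ hθΦ] at this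
    exact this
  have hsplit : ∑ γ ∈ B.S, B.coeff θ γ * B.pairing γ θ
      = B.coeff θ α * B.pairing α θ + ∑ γ ∈ B.S.erase α, B.coeff θ γ * B.pairing γ θ := by
    rw [← Finset.add_sum_erase _ _ hα]
  have hrest : ∑ γ ∈ B.S.erase α, B.coeff θ γ * B.pairing γ θ = 0 := by
    have := hsum
    rw [hsplit, hc, hp] at this
    omega
  have hzero : ∀ γ ∈ B.S, γ ≠ α → B.pairing γ θ = 0 := by
    intro γ hγ hne
    have hγe : γ ∈ B.S.erase α := Finset.mem_erase.mpr ⟨hne, hγ⟩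
    have hterm : B.coeff θ γ * B.pairing γ θ = 0 := by
      have hnn' : ∀ γ ∈ B.S.erase α, 0 ≤ B.coeff θ γ * B.pairing γ θ := by
        intro δ hδ
        have hδS : δ ∈ B.S := Finset.mem_of_mem_erase hδ
        exact mul_nonneg (le_of_lt (B.highest_coeff_pos δ hδS)) (hnn δ hδS)
      exact (Finset.sum_eq_zero_iff_of_nonneg hnn').mp hrest γ hγe
    have hcpos := B.highest_coeff_pos γ hγ
    exact (mul_eq_zero.mp hterm).resolve_left hcpos.ne'
  -- main
  intro β hβ
  have hmain : B.pairing β θ = B.coeff β α := by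
    rw [B.pairing_linear β hβ θ hθΦ]
    rw [Finset.sum_eq_single_of_mem α hα]
    · rw [hp]; ring
    · intro γ hγ hne
      rw [hzero γ hγ hne]; ring
  refine ⟨hmain, ?_⟩
  intro hNeg
  have h1 : B.coeff β α ≤ 0 := hNeg.2 α hα
  have h2 : -2 ≤ B.coeff β α := by
    have hmβ : -β ∈ B.Φ := B.neg_mem β hβ
    have := B.highest_le (-β) hmβ α hα
    rw [B.coeff_neg β hβ α hα, hc] at this
    omega
  rw [hmain]
  simp only [Set.mem_insert_iff, Set.mem_singleton_iff]
  omega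
end

section
/- Suppose α ∈ S satisfies c_α = 2 and ⟨α, θ^∨⟩ = 1. Then μ(α) = {θ}, i.e. the highest root θ is the unique positive root whose α-coefficient equals c_α = 2. (This is the claim of Theorem 6.7 that in types G₂, F₄, E₈ the set μ(α) is the singleton {α_max}, so that the fiber of π is SL(α_max)/B(α_max) ≅ P¹.) -/
/-- Coefficients of a root are uniquely determined. -/
lemma coeff_unique {V : Type*} [AddCommGroup V] [Module ℝ V] (B : BasedRootData V)
    {r : V} (hr : r ∈ B.Φ) (g : V → ℤ)
    (h : r = ∑ β ∈ B.S, ((g β : ℝ) • (β : V))) : ∀ β ∈ B.S, B.coeff r β = g β := by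
  intro β hβ
  have h0 : ∑ γ ∈ B.S, (((B.coeff r γ - g γ : ℤ) : ℝ) • (γ : V)) = 0 := by
    have := B.span_root r hr
    push_cast
    simp only [sub_smul, Finset.sum_sub_distrib]
    rw [← this, ← h, sub_self]
  have key := Fintype.linearIndependent_iff.mp B.indep
      (fun γ : B.S => ((B.coeff r γ - g γ : ℤ) : ℝ))
  have h1 : ∑ γ : B.S, (((B.coeff r γ - g γ : ℤ) : ℝ) • (γ : V)) = 0 := by
    rw [Finset.sum_coe_sort B.S (fun γ => ((B.coeff r γ - g γ : ℤ) : ℝ) • γ)]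
    exact h0
  have hz := key h1 ⟨β, hβ⟩
  have : (B.coeff r β - g β : ℤ) = 0 := by exact_mod_cast hz
  omega

lemma coeff_reflect {V : Type*} [AddCommGroup V] [Module ℝ V] (B : BasedRootData V)
    {r s : V} (hr : r ∈ B.Φ) (hs : s ∈ B.Φ) :
    ∀ β ∈ B.S, B.coeff (r - B.pairing r s • s) β
      = B.coeff r β - B.pairing r s * B.coeff s β := by
  apply coeff_unique B (B.reflect_mem r hr s hs)
  set p := B.pairing r s with hpdef
  conv_lhs => rw [B.span_root r hr, B.span_root s hs]
  rw [Finset.smul_sum, ← Finset.sum_sub_distrib]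
  refine Finset.sum_congr rfl fun β _ => ?_
  rw [← Int.cast_smul_eq_zsmul ℝ p ((B.coeff s β : ℝ) • (β : V)),
    smul_smul]
  push_cast
  rw [← sub_smul]

/-- Simple roots pair nonnegatively with the highest root. -/
lemma pairing_simple_highest_nonneg {V : Type*} [AddCommGroup V] [Module ℝ V]
    (B : BasedRootData V) {β : V} (hβ : β ∈ B.S) : 0 ≤ B.pairing β B.highest := by
  by_contra hneg
  push_neg at hneg
  have hβΦ : β ∈ B.Φ := B.S_subset hβ
  have hrc := coeff_reflect B hβΦ B.highest_mem β hβ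
  rw [B.coeff_simple_self β hβ] at hrc
  have hle := B.highest_le _ (B.reflect_mem β hβΦ B.highest B.highest_mem) β hβ
  rw [hrc] at hle
  have hcpos := B.highest_coeff_pos β hβ
  nlinarith

/-- suppose `α ∈ S` satisfies `c_α = 2` and `⟨α, θ^∨⟩ = 1`.
Then `μ(α) = {θ}`: the highest root is the unique positive root whose
`α`-coefficient equals `c_α = 2`. -/
theorem statement7 {V : Type*} [AddCommGroup V] [Module ℝ V] (B : BasedRootData V)
    (α : V) (hα : α ∈ B.S) (hc : B.coeff B.highest α = 2)
    (hp : B.pairing α B.highest = 1) :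
    B.mu α = {B.highest} := by
  ext r
  simp only [BasedRootData.mu, BasedRootData.Pos, Set.mem_setOf_eq, Set.mem_singleton_iff]
  constructor
  · rintro ⟨⟨hrΦ, hrpos⟩, hrα⟩
    by_contra hne
    -- there is β ∈ S with coeff r β < coeff θ β
    have hexists : ∃ β ∈ B.S, B.coeff r β < B.coeff B.highest β := by
      by_contra hall
      push_neg at hall
      have heq : ∀ β ∈ B.S, B.coeff r β = B.coeff B.highest β := fun β hβ =>
        le_antisymm (B.highest_le r hrΦ β hβ) (hall β hβ)
      apply hne
      rw [B.span_root r hrΦ, B.span_root B.highest B.highest_mem]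
      exact Finset.sum_congr rfl fun β hβ => by rw [heq β hβ]
    obtain ⟨β, hβ, hβlt⟩ := hexists
    -- p := pairing r θ ≥ 2
    have hplin := B.pairing_linear r hrΦ B.highest B.highest_mem
    have hp2 : 2 ≤ B.pairing r B.highest := by
      rw [hplin]
      calc (2 : ℤ) = B.coeff r α * B.pairing α B.highest := by rw [hp, hrα, hc]; ring
        _ ≤ ∑ γ ∈ B.S, B.coeff r γ * B.pairing γ B.highest := by
            apply Finset.single_le_sum (f := fun γ => B.coeff r γ * B.pairing γ B.highest)
              (fun γ hγ => mul_nonneg (hrpos γ hγ) (pairing_simple_highest_nonneg B hγ)) hα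
    -- the negated reflection violates highest_le at β
    set t := r - B.pairing r B.highest • B.highest with ht
    have htΦ : t ∈ B.Φ := B.reflect_mem r hrΦ B.highest B.highest_mem
    have hcoefft := coeff_reflect B hrΦ B.highest_mem β hβ
    have hnegΦ : -t ∈ B.Φ := B.neg_mem t htΦ
    have hcneg := B.coeff_neg t htΦ β hβ
    have hle := B.highest_le (-t) hnegΦ β hβ
    rw [hcneg, hcoefft] at hle
    have hcpos := B.highest_coeff_pos β hβ
    nlinarith
  · intro h
    subst h
    exact ⟨⟨B.highest_mem, fun β hβ => (B.highest_coeff_pos β hβ).le⟩, rfl⟩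
end

section
/- Each of E₀ = (−t₁, t₀), E₁ = (t, 0), E₂ = (0, t) lies in M := ker f, and M is generated as a B-module by {E₀, E₁, E₂}. (This is the generation claim in the proof of Lemma 5.1, the rank-2 case of Narasimhan–Ramanan's Proposition 4.4 on elementary transformations.) -/
open MvPolynomial

/-! `k` is a field, `R = k⟦t⟧`, `Bk k = R[t₀, t₁]` is the polynomial ring in
the two variables `t₀ = X 0`, `t₁ = X 1` over `R`, and
`piB k : Bk k →+* Pk k = k[t₀, t₁]` reduces coefficients modulo `t` (it is
induced by `R → k`, `t ↦ 0`, i.e. by the constant coefficient map on power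
series).  `Mker k` is the kernel `M` of the `B`-module map
`f : B ⊕ B → k[t₀, t₁]`, `f(h₀, h₁) = π(h₀)·t₀ + π(h₁)·t₁`, where
`k[t₀, t₁]` is a `B`-module via `π`. -/

/-- `B = k⟦t⟧[t₀, t₁]`. -/
abbrev Bk (k : Type*) [Field k] := MvPolynomial (Fin 2) (PowerSeries k)

/-- `k[t₀, t₁]`. -/
abbrev Pk (k : Type*) [Field k] := MvPolynomial (Fin 2) k

/-- `π : B → k[t₀, t₁]`, reduction of coefficients modulo `t`. -/
noncomputable def piB (k : Type*) [Field k] : Bk k →+* Pk k :=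
  MvPolynomial.map (PowerSeries.constantCoeff : PowerSeries k →+* k)

/-- `M = ker f ⊆ B ⊕ B`, where `f(h₀, h₁) = π(h₀)·t₀ + π(h₁)·t₁`. -/
def Mker (k : Type*) [Field k] : Set (Bk k × Bk k) :=
  {p | piB k p.1 * X 0 + piB k p.2 * X 1 = 0}

/-- `E₀ = (−t₁, t₀)`. -/
noncomputable def E0 (k : Type*) [Field k] : Bk k × Bk k := (-(X 1), X 0)

/-- `E₁ = (t, 0)`. -/
noncomputable def E1 (k : Type*) [Field k] : Bk k × Bk k := (C PowerSeries.X, 0)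

/-- `E₂ = (0, t)`. -/
noncomputable def E2 (k : Type*) [Field k] : Bk k × Bk k := (0, C PowerSeries.X)


private lemma dvd_of_piB_eq_zero (k : Type*) [Field k] (h : Bk k)
    (hh : piB k h = 0) : ∃ b, h = C PowerSeries.X * b := by
  have : (C PowerSeries.X : Bk k) ∣ h := by
    rw [C_dvd_iff_dvd_coeff]
    intro m
    rw [PowerSeries.X_dvd_iff]
    have := congrArg (coeff m) hh
    rwa [piB, coeff_map, coeff_zero] at this
  exact this

/-- lift `k[t₀,t₁] → B` via constant power series. -/
noncomputable def liftB (k : Type*) [Field k] : Pk k →+* Bk k :=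
  MvPolynomial.map (PowerSeries.C : k →+* PowerSeries k)

private lemma piB_liftB (k : Type*) [Field k] (g : Pk k) :
    piB k (liftB k g) = g := by
  rw [piB, liftB, map_map]
  have : (PowerSeries.constantCoeff : PowerSeries k →+* k).comp (PowerSeries.C : k →+* PowerSeries k) = RingHom.id k := by
    ext x; simp
  rw [this, map_id]

private lemma piB_X (k : Type*) [Field k] (i : Fin 2) : piB k (X i) = X i := by
  rw [piB, map_X]

private lemma primeX1 (k : Type*) [Field k] : Prime (X 1 : Pk k) := by
  have h1 : (renameEquiv k (Equiv.swap (0:Fin 2) 1)).toRingEquiv.toMulEquiv (X 1) = X 0 := by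
    show rename (Equiv.swap (0:Fin 2) 1) (X 1) = X 0
    simp
  have h2 : (finSuccEquiv k 1).toRingEquiv.toMulEquiv (X 0) = Polynomial.X :=
    finSuccEquiv_X_zero (R := k) (n := 1)
  rw [← MulEquiv.prime_iff (renameEquiv k (Equiv.swap (0:Fin 2) 1)).toRingEquiv.toMulEquiv, h1,
    ← MulEquiv.prime_iff (finSuccEquiv k 1).toRingEquiv.toMulEquiv, h2]
  exact Polynomial.prime_X

/-- each of `E₀ = (−t₁, t₀)`, `E₁ = (t, 0)`, `E₂ = (0, t)` lies
in `M = ker f`, and `M` is generated as a `B`-module by `{E₀, E₁, E₂}`. -/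
theorem statement13 (k : Type*) [Field k] :
    (E0 k ∈ Mker k ∧ E1 k ∈ Mker k ∧ E2 k ∈ Mker k) ∧
    (∀ p ∈ Mker k, ∃ a b c : Bk k, p = a • E0 k + b • E1 k + c • E2 k) := by
  have hX1 : Prime (X 1 : Pk k) := primeX1 k
  have hπC : piB k (C PowerSeries.X) = 0 := by
    rw [piB, map_C]
    simp
  refine ⟨⟨?_, ?_, ?_⟩, ?_⟩
  · show piB k (-(X 1)) * X 0 + piB k (X 0) * X 1 = 0
    rw [map_neg, piB_X, piB_X]; ring
  · show piB k (C PowerSeries.X) * X 0 + piB k 0 * X 1 = 0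
    rw [hπC, map_zero]; ring
  · show piB k 0 * X 0 + piB k (C PowerSeries.X) * X 1 = 0
    rw [hπC, map_zero]; ring
  · rintro ⟨h0, h1⟩ hp
    have hp : piB k h0 * X 0 + piB k h1 * X 1 = 0 := hp
    have hdvd : (X 1 : Pk k) ∣ piB k h0 * X 0 := by
      refine ⟨-(piB k h1), ?_⟩
      linear_combination hp
    have hX10 : ¬ (X 1 : Pk k) ∣ X 0 := by
      intro ⟨q, hq⟩
      have := congrArg (eval (fun i => if i = 0 then (1:k) else 0)) hq
      simp at this
    obtain ⟨g, hg⟩ := (hX1.dvd_mul.mp hdvd).resolve_right hX10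
    set a : Bk k := -(liftB k g) with ha
    have hπa : piB k a = -g := by rw [ha, map_neg, piB_liftB]
    have hh1 : piB k h1 = -(g * X 0) := by
      apply mul_left_cancel₀ hX1.ne_zero
      rw [hg] at hp
      linear_combination hp
    obtain ⟨b, hb⟩ := dvd_of_piB_eq_zero k (h0 - a * (-(X 1))) (by
      rw [map_sub, map_mul, hπa, map_neg, piB_X, hg]; ring)
    obtain ⟨c, hc⟩ := dvd_of_piB_eq_zero k (h1 - a * X 0) (by
      rw [map_sub, map_mul, hπa, piB_X, hh1]; ring)
    refine ⟨a, b, c, ?_⟩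
    have hb' : h0 = a * (-(X 1)) + C PowerSeries.X * b := by linear_combination hb
    have hc' : h1 = a * X 0 + C PowerSeries.X * c := by linear_combination hc
    show (h0, h1) = _
    simp only [E0, E1, E2, Prod.smul_mk, smul_eq_mul, Prod.mk_add_mk, mul_zero, mul_neg]
    rw [Prod.mk.injEq]
    constructor
    · rw [hb']; ring
    · rw [hc']; ring
end

section
/- The kernel of the B-linear map B³ → B ⊕ B sending (a, b, c) to a·E₀ + b·E₁ + c·E₂ (with E₀ = (−t₁, t₀), E₁ = (t, 0), E₂ = (0, t)) is the cyclic B-submodule generated by (t, t₁, −t₀), and this generator has trivial annihilator; i.e. t·E₀ + t₁·E₁ − t₀·E₂ = 0 holds and every relation among E₀, E₁, E₂ is a B-multiple of this one. (This is the unique-relation claim in the proof of Lemma 5.1.) -/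
open MvPolynomial

/-- the kernel of the `B`-linear map `B³ → B ⊕ B`,
`(a, b, c) ↦ a·E₀ + b·E₁ + c·E₂`, is the cyclic `B`-submodule generated by
`(t, t₁, −t₀)`, and this generator has trivial annihilator: the relation
`t·E₀ + t₁·E₁ − t₀·E₂ = 0` holds, every relation among `E₀, E₁, E₂` is a
`B`-multiple of it, and `d·(t, t₁, −t₀) = 0` forces `d = 0`. -/
theorem statement14 (k : Type*) [Field k] :
    ((C PowerSeries.X : Bk k) • E0 k + (X 1 : Bk k) • E1 k
        + (-(X 0) : Bk k) • E2 k = 0) ∧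
    (∀ a b c : Bk k, a • E0 k + b • E1 k + c • E2 k = 0 →
      ∃ d : Bk k, a = d * C PowerSeries.X ∧ b = d * X 1 ∧ c = d * (-(X 0))) ∧
    (∀ d : Bk k,
      d * C PowerSeries.X = 0 ∧ d * X 1 = 0 ∧ d * (-(X 0)) = 0 → d = 0) := by
  have hX0 : (C PowerSeries.X : Bk k) ≠ 0 := fun h => by
    simpa [PowerSeries.X_ne_zero] using (C_injective _ _ (h.trans C_0.symm))
  refine ⟨?_, ?_, ?_⟩
  · simp only [E0, E1, E2, Prod.smul_mk, Prod.mk_add_mk, smul_eq_mul, Prod.mk_eq_zero,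
      Prod.ext_iff]
    constructor <;> ring_nf <;> simp [mul_comm]
  · intro a b c h
    simp only [E0, E1, E2, Prod.smul_mk, Prod.mk_add_mk, smul_eq_mul, Prod.mk_eq_zero,
      Prod.ext_iff, Prod.fst_zero, Prod.snd_zero] at h
    obtain ⟨h1, h2⟩ := h
    -- h1 : a * -(X 1) + b * C X + c * 0 = 0, h2 : a * X 0 + b * 0 + c * C X = 0
    have hb : b * C PowerSeries.X = a * X 1 := by linear_combination h1
    have hc : c * C PowerSeries.X = -(a * X 0) := by linear_combination h2
    have hpi : piB k a = 0 := by
      have := congrArg (piB k) hb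
      simp only [piB, map_mul, MvPolynomial.map_X, map_neg,
        MvPolynomial.map_C, PowerSeries.constantCoeff_X, map_zero, C_0, mul_zero] at this
      rcases mul_eq_zero.mp this.symm with h | h
      · exact h
      · exact absurd h (X_ne_zero 1)
    have hdvd : (C PowerSeries.X : Bk k) ∣ a := by
      rw [C_dvd_iff_map_hom_eq_zero (PowerSeries.constantCoeff (R := k)) PowerSeries.X
        (fun r' => ⟨fun h => PowerSeries.X_dvd_iff.mpr h,
          fun h => PowerSeries.X_dvd_iff.mp h⟩)]
      exact hpi
    obtain ⟨d, hd⟩ := hdvd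
    refine ⟨d, by rw [hd]; ring, ?_, ?_⟩
    · apply mul_right_cancel₀ hX0
      rw [hb, hd]; ring
    · apply mul_right_cancel₀ hX0
      rw [hc, hd]; ring
  · rintro d ⟨h, -, -⟩
    rcases mul_eq_zero.mp h with h | h
    · exact h
    · exact absurd h hX0
end

section
/- For every (h₀, h₁) ∈ M := ker f, the element t divides h₀·t₀ + h₁·t₁ in B. The resulting B-linear map j : M → B, characterized by t·j(h₀, h₁) = h₀·t₀ + h₁·t₁, satisfies: (i) the map B → M, b ↦ b·E₀ (with E₀ = (−t₁, t₀)) is injective; (ii) ker j = B·E₀; and (iii) the image of j is the ideal of B generated by t₀ and t₁. Hence there is a short exact sequence of B-modules 0 → B → M → (t₀, t₁)B → 0. (This realizes the exact sequence 0 → B(−1) → M → B → 0 in the proof of Lemma 5.1.) -/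
open MvPolynomial

lemma prime_X0' (k : Type*) [Field k] : Prime (X 0 : Bk k) := by
  refine (MulEquiv.prime_iff (MvPolynomial.finSuccEquiv (PowerSeries k) 1).toRingEquiv.toMulEquiv).mp ?_
  show Prime ((MvPolynomial.finSuccEquiv (PowerSeries k) 1) (X 0))
  rw [MvPolynomial.finSuccEquiv_X_zero]
  exact Polynomial.prime_X

lemma piB_zero_iff' (k : Type*) [Field k] (g : Bk k) :
    piB k g = 0 ↔ (C PowerSeries.X : Bk k) ∣ g :=
  (C_dvd_iff_map_hom_eq_zero (PowerSeries.constantCoeff : PowerSeries k →+* k) PowerSeries.X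
    (fun _ => PowerSeries.X_dvd_iff.symm) g).symm

lemma CX_ne_zero' (k : Type*) [Field k] : (C PowerSeries.X : Bk k) ≠ 0 := by
  simp [MvPolynomial.C_eq_zero, PowerSeries.X_ne_zero]


/-- for every `(h₀, h₁) ∈ M = ker f`, the element `t` divides
`h₀·t₀ + h₁·t₁` in `B`.  The resulting `B`-linear map `j : M → B`,
characterized by `t·j(h₀, h₁) = h₀·t₀ + h₁·t₁`, satisfies:
(i) `b ↦ b·E₀` is injective `B → M`; (ii) `ker j = B·E₀`; and (iii) the image
of `j` is the ideal `(t₀, t₁)` of `B`.  Hence there is a short exact sequence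
`0 → B → M → (t₀, t₁)B → 0` of `B`-modules. -/
theorem statement15 (k : Type*) [Field k] :
    (∀ p ∈ Mker k, (C PowerSeries.X : Bk k) ∣ (p.1 * X 0 + p.2 * X 1)) ∧
    (∀ j : Bk k × Bk k → Bk k,
      (∀ p ∈ Mker k, (C PowerSeries.X : Bk k) * j p = p.1 * X 0 + p.2 * X 1) →
        (Function.Injective fun b : Bk k => b • E0 k) ∧
        (∀ p ∈ Mker k, (j p = 0 ↔ ∃ b : Bk k, p = b • E0 k)) ∧
        {q : Bk k | ∃ p ∈ Mker k, j p = q}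
          = ↑(Ideal.span {(X 0 : Bk k), (X 1 : Bk k)})) := by
  have hdvd : ∀ p ∈ Mker k, (C PowerSeries.X : Bk k) ∣ (p.1 * X 0 + p.2 * X 1) := by
    intro p hp
    rw [← piB_zero_iff']
    have h : piB k (p.1 * X 0 + p.2 * X 1) = piB k p.1 * X 0 + piB k p.2 * X 1 := by
      simp [piB]
    rw [h]
    exact hp
  refine ⟨hdvd, fun j hj => ⟨?_, ?_, ?_⟩⟩
  · -- injectivity
    intro a b hab
    have h2 := congrArg Prod.snd hab
    simp only [E0, Prod.smul_snd, smul_eq_mul] at h2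
    exact mul_right_cancel₀ (MvPolynomial.X_ne_zero 0) h2
  · -- kernel of j = B·E0
    intro p hp
    constructor
    · intro hj0
      have hsum : p.1 * X 0 + p.2 * X 1 = 0 := by
        rw [← hj p hp, hj0, mul_zero]
      have hX0dvd : (X 0 : Bk k) ∣ p.2 * X 1 := ⟨-p.1, by linear_combination hsum⟩
      rcases (prime_X0' k).2.2 _ _ hX0dvd with h | h
      · obtain ⟨b, hb⟩ := h
        refine ⟨b, ?_⟩
        have h1 : p.1 = -(b * X 1) := by
          have : p.1 * X 0 = -(b * X 1) * X 0 := by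
            linear_combination hsum - X 1 * hb
          exact mul_right_cancel₀ (MvPolynomial.X_ne_zero 0) this
        have : b • E0 k = (b * -(X 1), b * X 0) := rfl
        rw [this]
        refine Prod.ext ?_ ?_
        · show p.1 = b * -(X 1)
          rw [h1]; ring
        · show p.2 = b * X 0
          rw [hb]; ring
      · rw [MvPolynomial.X_dvd_X] at h
        exact absurd h (by decide)
    · rintro ⟨b, rfl⟩
      have h := hj _ hp
      have hz : (b • E0 k).1 * X 0 + (b • E0 k).2 * X 1 = 0 := by
        show b * -(X 1) * X 0 + b * X 0 * X 1 = 0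
        ring
      rw [hz] at h
      rcases mul_eq_zero.mp h with h' | h'
      · exact absurd h' (CX_ne_zero' k)
      · exact h'
  · -- image of j
    ext q
    simp only [Set.mem_setOf_eq, SetLike.mem_coe]
    constructor
    · rintro ⟨p, hp, rfl⟩
      have h := hj p hp
      have hc0 : MvPolynomial.coeff 0 (j p) = 0 := by
        have hc := congrArg (MvPolynomial.coeff 0) h
        simp only [MvPolynomial.coeff_C_mul, MvPolynomial.coeff_add,
          MvPolynomial.coeff_mul_X'] at hc
        simp only [Finsupp.mem_support_iff, Finsupp.coe_zero, Pi.zero_apply, ne_eq,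
          not_true_eq_false, if_false] at hc
        rw [add_zero] at hc
        rcases mul_eq_zero.mp hc with h' | h'
        · exact absurd h' PowerSeries.X_ne_zero
        · exact h'
      have hset : (X '' (Set.univ : Set (Fin 2)) : Set (Bk k)) = {X 0, X 1} := by
        rw [Set.image_univ]
        ext y
        simp [Set.mem_range, Fin.exists_fin_two, eq_comm]
      rw [← hset, mem_ideal_span_X_image]
      intro m hm
      have hm0 : m ≠ 0 := by
        rintro rfl
        exact (MvPolynomial.mem_support_iff.mp hm) hc0
      obtain ⟨i, hi⟩ := Finsupp.ne_iff.mp hm0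
      exact ⟨i, Set.mem_univ i, by simpa using hi⟩
    · intro hq
      rw [Ideal.mem_span_pair] at hq
      obtain ⟨a, b, hab⟩ := hq
      have hmem : (C PowerSeries.X * a, C PowerSeries.X * b) ∈ Mker k := by
        simp [Mker, piB, PowerSeries.constantCoeff_X]
      refine ⟨(C PowerSeries.X * a, C PowerSeries.X * b), hmem, ?_⟩
      have h := hj _ hmem
      simp only at h
      have : (C PowerSeries.X : Bk k) * j (C PowerSeries.X * a, C PowerSeries.X * b)
          = C PowerSeries.X * q := by
        rw [h, ← hab]; ring
      exact mul_left_cancel₀ (CX_ne_zero' k) this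
end
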